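/- For every H ∈ (0,1), every t ∈ (0,1], every integer j ≥ 0, and every n = 2^j + k with 0 ≤ k < 2^j such that k + 2 ≤ k̂_{t,j}, the Haar coefficient of f_t^{(1)} satisfies ⟨f_t^{(1)}, ℋ_n⟩² ≤ 2^{−2jH} · (k̂_{t,j} − (k+1))^{2H−3} · (H − 1/2)²/16. -/

import Mathlib

open MeasureTheory ProbabilityTheory Real Filter

noncomputable section

/-- The mother Haar wavelet: 1 on [0,1/2), -1 on [1/2,1], 0 otherwise. -/
def haarMother (s : ℝ) : ℝ :=
  if s ∈ Set.Ico (0 : ℝ) (1/2) then 1 else if s ∈ Set.Icc (1/2 : ℝ) 1 then -1 else 0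

/-- The Haar orthonormal basis of L²[0,1]: `haarFun 0 = 1` on `[0,1]`, and for
`n = 2^j + k` with `0 ≤ k < 2^j`, `haarFun n s = 2^(j/2) * haarMother (2^j * s - k)`. -/
def haarFun (n : ℕ) (s : ℝ) : ℝ :=
  if n = 0 then (if s ∈ Set.Icc (0 : ℝ) 1 then 1 else 0)
  else (2 : ℝ) ^ ((Nat.log2 n : ℝ) / 2) *
    haarMother ((2 : ℝ) ^ (Nat.log2 n : ℕ) * s - ((n - 2 ^ Nat.log2 n : ℕ) : ℝ))

/-- Inner product on L²[0,1]. -/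
def innerUnit (f g : ℝ → ℝ) : ℝ := ∫ s in (0 : ℝ)..1, f s * g s

/-- Inner product on L²[-1,0]. -/
def innerNeg (f g : ℝ → ℝ) : ℝ := ∫ s in (-1 : ℝ)..0, f s * g s

/-- The Haar orthonormal basis of L²[-1,0]. -/
def haarFunNeg (n : ℕ) (s : ℝ) : ℝ := haarFun n (s + 1)

/-- `f_t^{(1)}(s) = (t-s)^(H-1/2)` for `s ∈ [0,t)`, `0` otherwise. -/
def f1 (H t : ℝ) (s : ℝ) : ℝ := if 0 ≤ s ∧ s < t then (t - s) ^ (H - 1/2) else 0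

/-- `f_t^{(2)}(s) = (t-s)^(H-1/2) - (-s)^(H-1/2)` for `s ∈ [-1,0)`, `0` otherwise. -/
def f2 (H t : ℝ) (s : ℝ) : ℝ :=
  if -1 ≤ s ∧ s < 0 then (t - s) ^ (H - 1/2) - (-s) ^ (H - 1/2) else 0

/-- Haar coefficient `⟨f_t^{(1)}, ℋ_n⟩`. -/
def coeff1 (H t : ℝ) (n : ℕ) : ℝ := innerUnit (f1 H t) (haarFun n)

/-- Haar coefficient `⟨f_t^{(2)}, ℋ̃_n⟩`. -/
def coeff2 (H t : ℝ) (n : ℕ) : ℝ := innerNeg (f2 H t) (haarFunNeg n)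

/-- `g_n(t,H) = ∫₀¹ ((t + 1/x)^(H-3/2) - (1/x)^(H-3/2)) x⁻³ (∫₀ˣ ℋ_n(y) dy) dx`. -/
def gCoeff (H t : ℝ) (n : ℕ) : ℝ :=
  ∫ x in (0 : ℝ)..1,
    ((t + x⁻¹) ^ (H - 3/2) - (x⁻¹) ^ (H - 3/2)) * (x⁻¹) ^ (3 : ℕ) *
      (∫ y in (0 : ℝ)..x, haarFun n y)

/-- `C_H = 1/Γ(H + 1/2)`. -/
def CH (H : ℝ) : ℝ := 1 / Real.Gamma (H + 1/2)

lemma haar_eval (j k : ℕ) (hk : k < 2 ^ j) (s : ℝ) :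
    haarFun (2 ^ j + k) s
      = (2 : ℝ) ^ ((j : ℝ) / 2) * haarMother ((2 : ℝ) ^ (j : ℕ) * s - (k : ℝ)) := by
  have hlog : Nat.log2 (2 ^ j + k) = j := by
    rw [Nat.log2_eq_log_two]
    exact Nat.log_eq_of_pow_le_of_lt_pow (Nat.le_add_right _ _) (by rw [pow_succ]; omega)
  have hne : 2 ^ j + k ≠ 0 := by positivity
  simp [haarFun, hne, hlog]

lemma int_rpow_eval (p : ℝ) (hp : -1 < p) (t u v : ℝ) :
    ∫ s in u..v, (t - s) ^ p = ((t - u) ^ (p + 1) - (t - v) ^ (p + 1)) / (p + 1) := by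
  have h := intervalIntegral.integral_comp_sub_left (a := u) (b := v) (fun x : ℝ => x ^ p) t
  try simp only at h
  rw [h, integral_rpow (Or.inl hp)]

lemma ae_of_Ioo {a b : ℝ} {f g : ℝ → ℝ} (hle : a ≤ b) (h : ∀ x ∈ Set.Ioo a b, f x = g x) :
    ∀ᵐ x ∂(volume : Measure ℝ), x ∈ Set.uIoc a b → f x = g x := by
  have hb : ∀ᵐ x : ℝ, x ≠ b := by
    rw [ae_iff]
    simp [Real.volume_singleton]
  filter_upwards [hb] with x hx hmem
  rw [Set.uIoc_of_le hle] at hmem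
  exact h x ⟨hmem.1, lt_of_le_of_ne hmem.2 hx⟩

lemma ae_of_Ioo' {a b : ℝ} {f g : ℝ → ℝ} (hle : a ≤ b) (h : ∀ x ∈ Set.Ioo a b, f x = g x) :
    f =ᵐ[(volume : Measure ℝ).restrict (Set.uIoc a b)] g :=
  (ae_restrict_iff' measurableSet_uIoc).mpr (ae_of_Ioo hle h)


lemma haarMother_pos {u : ℝ} (h1 : 0 ≤ u) (h2 : u < 1/2) : haarMother u = 1 := by
  rw [haarMother, if_pos (Set.mem_Ico.mpr ⟨h1, h2⟩)]

lemma haarMother_negone {u : ℝ} (h1 : 1/2 ≤ u) (h2 : u ≤ 1) : haarMother u = -1 := by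
  have c1 : u ∉ Set.Ico (0 : ℝ) (1/2) := fun hc => absurd hc.2 (by linarith)
  rw [haarMother, if_neg c1, if_pos (Set.mem_Icc.mpr ⟨h1, h2⟩)]

lemma haarMother_zero_left {u : ℝ} (h : u < 0) : haarMother u = 0 := by
  have c1 : u ∉ Set.Ico (0 : ℝ) (1/2) := fun hc => absurd hc.1 (by linarith)
  have c2 : u ∉ Set.Icc (1/2 : ℝ) 1 := fun hc => absurd hc.1 (by linarith)
  rw [haarMother, if_neg c1, if_neg c2]

lemma haarMother_zero_right {u : ℝ} (h : 1 < u) : haarMother u = 0 := by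
  have c1 : u ∉ Set.Ico (0 : ℝ) (1/2) := fun hc => absurd hc.2 (by linarith)
  have c2 : u ∉ Set.Icc (1/2 : ℝ) 1 := fun hc => absurd hc.2 (by linarith)
  rw [haarMother, if_neg c1, if_neg c2]

lemma secondDiff_bound (q : ℝ) (hq0 : 0 < q) (hq2 : q ≤ 2) (x h : ℝ) (hx : 0 < x)
    (hh : 0 < h) :
    |(x + 2 * h) ^ q - 2 * (x + h) ^ q + x ^ q| ≤ q * |q - 1| * (h ^ 2 * x ^ (q - 2)) := by
  set D : ℝ → ℝ := fun y => (y + h) ^ q - y ^ q with hD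
  have hDd : ∀ y : ℝ, 0 < y → HasDerivAt D (q * (y + h) ^ (q - 1) - q * y ^ (q - 1)) y := by
    intro y hy
    have h1 : HasDerivAt (fun y : ℝ => (y + h) ^ q) (q * (y + h) ^ (q - 1)) y := by
      have := (Real.hasDerivAt_rpow_const (x := y + h) (p := q)
        (Or.inl (by positivity))).comp y ((hasDerivAt_id y).add_const h)
      rw [mul_one] at this; exact this
    have h2 : HasDerivAt (fun y : ℝ => y ^ q) (q * y ^ (q - 1)) y :=
      Real.hasDerivAt_rpow_const (Or.inl hy.ne')
    exact h1.sub h2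
  obtain ⟨η, hη, hslope⟩ := exists_hasDerivAt_eq_slope D
    (fun y => q * (y + h) ^ (q - 1) - q * y ^ (q - 1)) (show x < x + h by linarith)
    (fun y hy => ((hDd y (lt_of_lt_of_le hx hy.1)).continuousAt).continuousWithinAt)
    (fun y hy => hDd y (lt_trans hx hy.1))
  have hη0 : 0 < η := lt_trans hx hη.1
  set E : ℝ → ℝ := fun y => y ^ (q - 1) with hE
  have hEd : ∀ y : ℝ, 0 < y → HasDerivAt E ((q - 1) * y ^ (q - 2)) y := by
    intro y hy
    have := Real.hasDerivAt_rpow_const (x := y) (p := q - 1) (Or.inl hy.ne')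
    simpa [show q - 1 - 1 = q - 2 by ring] using this
  obtain ⟨ξ, hξ, hslope2⟩ := exists_hasDerivAt_eq_slope E (fun y => (q - 1) * y ^ (q - 2))
    (show η < η + h by linarith)
    (fun y hy => ((hEd y (lt_of_lt_of_le hη0 hy.1)).continuousAt).continuousWithinAt)
    (fun y hy => hEd y (lt_trans hη0 hy.1))
  have hξ0 : 0 < ξ := lt_trans hη0 hξ.1
  have e2 : D (x + h) - D x = (q * (η + h) ^ (q - 1) - q * η ^ (q - 1)) * h := by
    rw [hslope]
    have : x + h - x = h := by ring
    rw [this]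
    field_simp
  have e3 : (η + h) ^ (q - 1) - η ^ (q - 1) = (q - 1) * ξ ^ (q - 2) * h := by
    have : η + h - η = h := by ring
    rw [hslope2, hE, this]
    field_simp
  have key : (x + 2 * h) ^ q - 2 * (x + h) ^ q + x ^ q = q * (q - 1) * ξ ^ (q - 2) * h ^ 2 := by
    have e1 : D (x + h) - D x = (x + 2 * h) ^ q - 2 * (x + h) ^ q + x ^ q := by
      simp only [hD]
      rw [show x + h + h = x + 2 * h by ring]
      ring
    have e2' : q * (η + h) ^ (q - 1) - q * η ^ (q - 1)
        = q * ((η + h) ^ (q - 1) - η ^ (q - 1)) := by ring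
    rw [← e1, e2, e2', e3]
    ring
  rw [key]
  have hξp : (0 : ℝ) < ξ ^ (q - 2) := Real.rpow_pos_of_pos hξ0 _
  have habs : |q * (q - 1) * ξ ^ (q - 2) * h ^ 2| = q * |q - 1| * (h ^ 2 * ξ ^ (q - 2)) := by
    rw [abs_mul, abs_mul, abs_mul, abs_of_pos hq0, abs_of_pos hξp,
      abs_of_pos (pow_pos hh 2)]
    ring
  rw [habs]
  have hle : ξ ^ (q - 2) ≤ x ^ (q - 2) :=
    Real.rpow_le_rpow_of_nonpos hx (by linarith [hη.1, hξ.1]) (by linarith)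
  have := mul_le_mul_of_nonneg_left hle (sq_nonneg h)
  exact mul_le_mul_of_nonneg_left (by simpa [sq] using this) (by positivity)

set_option maxHeartbeats 1000000 in
theorem stmt9 (H : ℝ) (hH : H ∈ Set.Ioo (0 : ℝ) 1) (t : ℝ) (ht : t ∈ Set.Ioc (0 : ℝ) 1)
    (j khat : ℕ) (hkhat : khat < 2 ^ j)
    (hmem : (khat : ℝ) / 2 ^ j ≤ t ∧ (t < ((khat : ℝ) + 1) / 2 ^ j ∨ khat + 1 = 2 ^ j))
    (k : ℕ) (hk : k < 2 ^ j) (hkk : k + 2 ≤ khat) :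
    (coeff1 H t (2 ^ j + k)) ^ 2
      ≤ (2 : ℝ) ^ (-(2 * (j : ℝ) * H)) * ((khat : ℝ) - ((k : ℝ) + 1)) ^ (2 * H - 3)
          * (H - 1/2) ^ 2 / 16 := by
  obtain ⟨hH0, hH1⟩ := hH
  obtain ⟨ht0, ht1⟩ := ht
  set q : ℝ := H + 1/2 with hqdef
  have hq0 : 0 < q := by rw [hqdef]; linarith
  set e : ℝ := (2 : ℝ) ^ (j : ℕ) with hedef
  have he : (0 : ℝ) < e := by positivity
  set c : ℝ := (2 : ℝ) ^ ((j : ℝ) / 2) with hcdef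
  set a : ℝ := (k : ℝ) / e with hadef
  set b : ℝ := ((k : ℝ) + 1) / e with hbdef
  set mid : ℝ := ((k : ℝ) + 1/2) / e with hmdef
  have hea : e * a = (k : ℝ) := by rw [hadef]; field_simp
  have hem : e * mid = (k : ℝ) + 1/2 := by rw [hmdef]; field_simp
  have heb : e * b = (k : ℝ) + 1 := by rw [hbdef]; field_simp
  have ha0 : 0 ≤ a := by positivity
  have ham : a < mid := by
    rw [hadef, hmdef]; gcongr ?x / e
    · norm_num
  have hmb : mid < b := by
    rw [hmdef, hbdef]; gcongr ?x / e
    · norm_num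
  have hk1e : ((k : ℝ) + 1) ≤ e := by
    rw [hedef]; exact_mod_cast Nat.succ_le_of_lt hk
  have hb1 : b ≤ 1 := by rw [hbdef]; exact (div_le_one he).mpr hk1e
  have hkh : ((k : ℝ) + 2) ≤ (khat : ℝ) := by exact_mod_cast hkk
  have hte : (khat : ℝ) / e ≤ t := hmem.1
  set d : ℝ := (khat : ℝ) - ((k : ℝ) + 1) with hddef
  have hd1 : (1 : ℝ) ≤ d := by rw [hddef]; linarith
  have hxlb : d / e ≤ t - b := by
    have h1 : d / e = (khat : ℝ) / e - b := by rw [hddef, hbdef]; ring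
    linarith
  have hdep : 0 < d / e := by positivity
  have hxpos : 0 < t - b := lt_of_lt_of_le hdep hxlb
  have hbt : b < t := by linarith
  set F : ℝ → ℝ := fun s => f1 H t s * haarFun (2 ^ j + k) s with hFdef
  have hhaar : ∀ s : ℝ, haarFun (2 ^ j + k) s = c * haarMother (e * s - (k : ℝ)) :=
    fun s => haar_eval j k hk s
  -- piecewise formulas
  have hF0 : ∀ s ∈ Set.Ioo (0 : ℝ) a, F s = 0 := by
    intro s hs
    have h2 : e * s < (k : ℝ) := hea ▸ (mul_lt_mul_iff_right₀ he).mpr hs.2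
    have hmot : haarMother (e * s - (k : ℝ)) = 0 := haarMother_zero_left (by linarith)
    rw [hFdef]; simp only [hhaar s, hmot, mul_zero]
  have hF1 : ∀ s ∈ Set.Ioo a mid, F s = c * (t - s) ^ (H - 1/2) := by
    intro s hs
    have h1 : (k : ℝ) < e * s := hea ▸ (mul_lt_mul_iff_right₀ he).mpr hs.1
    have h2 : e * s < (k : ℝ) + 1/2 := hem ▸ (mul_lt_mul_iff_right₀ he).mpr hs.2
    have hs0 : 0 ≤ s := le_trans ha0 (le_of_lt hs.1)
    have hst : s < t := by linarith [hs.2, hmb, hbt]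
    have hmot : haarMother (e * s - (k : ℝ)) = 1 :=
      haarMother_pos (by linarith) (by linarith)
    rw [hFdef]; simp only [hhaar s, hmot, mul_one, f1, if_pos (And.intro hs0 hst)]
    ring
  have hF2 : ∀ s ∈ Set.Ioo mid b, F s = -(c * (t - s) ^ (H - 1/2)) := by
    intro s hs
    have h1 : (k : ℝ) + 1/2 < e * s := hem ▸ (mul_lt_mul_iff_right₀ he).mpr hs.1
    have h2 : e * s < (k : ℝ) + 1 := heb ▸ (mul_lt_mul_iff_right₀ he).mpr hs.2
    have hs0 : 0 ≤ s := le_trans ha0 (le_of_lt (lt_trans ham hs.1))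
    have hst : s < t := by linarith [hs.2, hbt]
    have hmot : haarMother (e * s - (k : ℝ)) = -1 :=
      haarMother_negone (by linarith) (by nlinarith)
    rw [hFdef]; simp only [hhaar s, hmot, f1, if_pos (And.intro hs0 hst)]
    ring
  have hF3 : ∀ s ∈ Set.Ioo b (1 : ℝ), F s = 0 := by
    intro s hs
    have h1 : (k : ℝ) + 1 < e * s := heb ▸ (mul_lt_mul_iff_right₀ he).mpr hs.1
    have hmot : haarMother (e * s - (k : ℝ)) = 0 := haarMother_zero_right (by nlinarith)
    rw [hFdef]; simp only [hhaar s, hmot, mul_zero]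
  -- integrabilities
  have hcont1 : IntervalIntegrable (fun s => c * (t - s) ^ (H - 1/2)) volume a mid := by
    apply ContinuousOn.intervalIntegrable
    apply ContinuousOn.mul continuousOn_const
    apply ContinuousOn.rpow_const (continuous_const.sub continuous_id).continuousOn
    intro s hs
    left
    rw [Set.uIcc_of_le (le_of_lt ham)] at hs
    have : s < t := by have := hs.2; linarith
    exact sub_ne_zero.mpr (ne_of_gt this)
  have hcont2 : IntervalIntegrable (fun s => -(c * (t - s) ^ (H - 1/2))) volume mid b := by
    apply IntervalIntegrable.neg
    apply ContinuousOn.intervalIntegrable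
    apply ContinuousOn.mul continuousOn_const
    apply ContinuousOn.rpow_const (continuous_const.sub continuous_id).continuousOn
    intro s hs
    left
    rw [Set.uIcc_of_le (le_of_lt hmb)] at hs
    have : s < t := by have := hs.2; linarith
    exact sub_ne_zero.mpr (ne_of_gt this)
  have hi0 : IntervalIntegrable F volume 0 a :=
    (intervalIntegrable_const (c := (0 : ℝ))).congr_ae (ae_of_Ioo' ha0 hF0).symm
  have hi1 : IntervalIntegrable F volume a mid :=
    hcont1.congr_ae (ae_of_Ioo' (le_of_lt ham) hF1).symm
  have hi2 : IntervalIntegrable F volume mid b :=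
    hcont2.congr_ae (ae_of_Ioo' (le_of_lt hmb) hF2).symm
  have hi3 : IntervalIntegrable F volume b 1 :=
    (intervalIntegrable_const (c := (0 : ℝ))).congr_ae (ae_of_Ioo' hb1 hF3).symm
  -- values
  have hpgt : (-1 : ℝ) < H - 1/2 := by linarith
  have hp1q : H - 1/2 + 1 = q := by rw [hqdef]; ring
  have v0 : ∫ s in (0 : ℝ)..a, F s = 0 := by
    rw [intervalIntegral.integral_congr_ae (ae_of_Ioo ha0 hF0)]
    simp
  have v1 : ∫ s in a..mid, F s = c * (((t - a) ^ q - (t - mid) ^ q) / q) := by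
    rw [intervalIntegral.integral_congr_ae (ae_of_Ioo (le_of_lt ham) hF1),
      intervalIntegral.integral_const_mul, int_rpow_eval (H - 1/2) hpgt t a mid, hp1q]
  have v2 : ∫ s in mid..b, F s = -(c * (((t - mid) ^ q - (t - b) ^ q) / q)) := by
    rw [intervalIntegral.integral_congr_ae (ae_of_Ioo (le_of_lt hmb) hF2),
      intervalIntegral.integral_neg, intervalIntegral.integral_const_mul,
      int_rpow_eval (H - 1/2) hpgt t mid b, hp1q]
  have v3 : ∫ s in b..(1 : ℝ), F s = 0 := by
    rw [intervalIntegral.integral_congr_ae (ae_of_Ioo hb1 hF3)]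
    simp
  have total : coeff1 H t (2 ^ j + k)
      = c / q * ((t - a) ^ q - 2 * (t - mid) ^ q + (t - b) ^ q) := by
    have hsplit : (∫ s in (0 : ℝ)..1, F s)
        = (∫ s in (0 : ℝ)..a, F s) + (∫ s in a..mid, F s) + (∫ s in mid..b, F s)
          + (∫ s in b..(1 : ℝ), F s) := by
      have s1 := intervalIntegral.integral_add_adjacent_intervals hi0 hi1
      have s2 := intervalIntegral.integral_add_adjacent_intervals (hi0.trans hi1) hi2
      have s3 := intervalIntegral.integral_add_adjacent_intervals ((hi0.trans hi1).trans hi2) hi3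
      linarith
    have hco : coeff1 H t (2 ^ j + k) = ∫ s in (0 : ℝ)..1, F s := by
      simp only [coeff1, innerUnit, hFdef]
    rw [hco, hsplit, v0, v1, v2, v3]
    have hq' : q ≠ 0 := ne_of_gt hq0
    field_simp
    ring
  -- second difference bound
  have hta : t - a = t - b + 2 * (1 / (2 * e)) := by rw [hadef, hbdef]; field_simp; ring
  have htm : t - mid = t - b + 1 / (2 * e) := by rw [hmdef, hbdef]; field_simp; ring
  have hbound := secondDiff_bound q hq0 (by rw [hqdef]; linarith) (t - b) (1 / (2 * e))
    hxpos (by positivity)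
  rw [← hta, ← htm] at hbound
  set S : ℝ := (t - a) ^ q - 2 * (t - mid) ^ q + (t - b) ^ q with hSdef
  set R : ℝ := q * |q - 1| * ((1 / (2 * e)) ^ 2 * (t - b) ^ (q - 2)) with hRdef
  have hS2 : S ^ 2 ≤ R ^ 2 := by
    calc S ^ 2 = |S| ^ 2 := (sq_abs S).symm
    _ ≤ R ^ 2 := pow_le_pow_left₀ (abs_nonneg S) hbound 2
  have step1 : (coeff1 H t (2 ^ j + k)) ^ 2 ≤ (c / q) ^ 2 * R ^ 2 := by
    rw [total, mul_pow]
    exact mul_le_mul_of_nonneg_left hS2 (by positivity)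
  -- algebraic computation of the bound
  have hc2 : c ^ 2 = e := by
    rw [hcdef, hedef, sq, ← Real.rpow_add two_pos, ← Real.rpow_natCast 2 j]
    congr 1
    ring
  have hq1 : (q - 1) ^ 2 = (H - 1/2) ^ 2 := by rw [hqdef]; ring_nf
  have hx2 : ((t - b) ^ (q - 2)) ^ 2 = (t - b) ^ (2 * H - 3) := by
    rw [sq, ← Real.rpow_add hxpos]
    congr 1
    rw [hqdef]; ring
  have hRs : (c / q) ^ 2 * R ^ 2
      = (H - 1/2) ^ 2 * (t - b) ^ (2 * H - 3) * (e / (16 * e ^ (4 : ℕ))) := by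
    have hq' : q ≠ 0 := ne_of_gt hq0
    have he' : e ≠ 0 := ne_of_gt he
    have expand : (c / q) ^ 2 * R ^ 2
        = (c ^ 2 * ((q - 1) ^ 2 * ((t - b) ^ (q - 2)) ^ 2)) / (16 * e ^ (4 : ℕ)) := by
      rw [hRdef, mul_pow, mul_pow, sq_abs]
      field_simp
      ring
    rw [expand, hc2, hq1, hx2]
    ring
  have hXle : (t - b) ^ (2 * H - 3) ≤ d ^ (2 * H - 3) / e ^ (2 * H - 3) := by
    have h1 : (t - b) ^ (2 * H - 3) ≤ (d / e) ^ (2 * H - 3) :=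
      Real.rpow_le_rpow_of_nonpos hdep hxlb (by linarith)
    rw [Real.div_rpow (by linarith) (le_of_lt he)] at h1
    exact h1
  have hpow : e / (e ^ (2 * H - 3) * e ^ (4 : ℕ)) = (2 : ℝ) ^ (-(2 * (j : ℝ) * H)) := by
    have h1 : e = (2 : ℝ) ^ ((j : ℝ)) := by rw [hedef, Real.rpow_natCast]
    rw [h1, ← Real.rpow_natCast ((2 : ℝ) ^ ((j : ℝ))) 4, ← Real.rpow_mul (le_of_lt two_pos),
      ← Real.rpow_mul (le_of_lt two_pos), ← Real.rpow_add two_pos, ← Real.rpow_sub two_pos]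
    congr 1
    push_cast
    ring
  have step2 : (H - 1/2) ^ 2 * (t - b) ^ (2 * H - 3) * (e / (16 * e ^ (4 : ℕ)))
      ≤ (H - 1/2) ^ 2 * (d ^ (2 * H - 3) / e ^ (2 * H - 3)) * (e / (16 * e ^ (4 : ℕ))) := by
    apply mul_le_mul_of_nonneg_right _ (by positivity)
    exact mul_le_mul_of_nonneg_left hXle (sq_nonneg _)
  have step3 : (H - 1/2) ^ 2 * (d ^ (2 * H - 3) / e ^ (2 * H - 3)) * (e / (16 * e ^ (4 : ℕ)))
      = (2 : ℝ) ^ (-(2 * (j : ℝ) * H)) * d ^ (2 * H - 3) * (H - 1/2) ^ 2 / 16 := by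
    rw [← hpow]
    ring
  calc (coeff1 H t (2 ^ j + k)) ^ 2 ≤ (c / q) ^ 2 * R ^ 2 := step1
  _ = (H - 1/2) ^ 2 * (t - b) ^ (2 * H - 3) * (e / (16 * e ^ (4 : ℕ))) := hRs
  _ ≤ (H - 1/2) ^ 2 * (d ^ (2 * H - 3) / e ^ (2 * H - 3)) * (e / (16 * e ^ (4 : ℕ))) := step2
  _ = (2 : ℝ) ^ (-(2 * (j : ℝ) * H)) * d ^ (2 * H - 3) * (H - 1/2) ^ 2 / 16 := step3
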